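/- Let X_0 ∈ ℂ^{N×N} be Hermitian, and let Q, R : ℝ → ℂ^{N×N} be differentiable matrix-valued functions such that for all t ∈ ℝ: Q(t) is unitary, R(t) is upper triangular with positive real diagonal entries, and exp(t X_0) = Q(t) R(t). Then X(t) := Q(t)^* X_0 Q(t) satisfies X(0) = X_0, X(t) = R(t) X_0 R(t)^{−1} for all t, and X is differentiable with ∂_t X(t) = X(t) B(X(t)) − B(X(t)) X(t), where B(Y) := Y_− − (Y_−)^* and Y_− denotes the strictly lower triangular part of Y. -/

import Mathlib

open Matrix

noncomputable section

/-- The strictly lower triangular part `Y_-` of a square matrix. -/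
def lowerPart {N : ℕ} (Y : Matrix (Fin N) (Fin N) ℂ) : Matrix (Fin N) (Fin N) ℂ :=
  Matrix.of fun i j => if (j : ℕ) < (i : ℕ) then Y i j else 0

/-- The Toda generator `B(Y) = Y_- - (Y_-)^*`. -/
def todaB {N : ℕ} (Y : Matrix (Fin N) (Fin N) ℂ) : Matrix (Fin N) (Fin N) ℂ :=
  lowerPart Y - (lowerPart Y)ᴴ

lemma exp_entry_hasDerivAt {N : ℕ} (X0 : Matrix (Fin N) (Fin N) ℂ) (t : ℝ) (i j : Fin N) :
    HasDerivAt (fun s : ℝ => (NormedSpace.exp ((s : ℂ) • X0)) i j)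
      ((X0 * NormedSpace.exp ((t : ℂ) • X0)) i j) t := by
  letI : SeminormedRing (Matrix (Fin N) (Fin N) ℂ) := Matrix.linftyOpSemiNormedRing
  letI : NormedRing (Matrix (Fin N) (Fin N) ℂ) := Matrix.linftyOpNormedRing
  letI : NormedAlgebra ℂ (Matrix (Fin N) (Fin N) ℂ) := Matrix.linftyOpNormedAlgebra
  have h1 : HasDerivAt (fun u : ℂ => NormedSpace.exp (u • X0))
      (X0 * NormedSpace.exp (((t : ℝ) : ℂ) • X0)) ((t : ℝ) : ℂ) :=
    hasDerivAt_exp_smul_const' X0 ((t : ℝ) : ℂ)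
  have h2 : HasDerivAt (fun s : ℝ => NormedSpace.exp ((s : ℂ) • X0))
      (X0 * NormedSpace.exp ((t : ℂ) • X0)) t := by
    have := (h1.hasFDerivAt.restrictScalars ℝ).comp_hasDerivAt (x := t)
      Complex.ofRealCLM.hasDerivAt
    exact this.congr_deriv (one_smul ℂ _)
  exact (((Matrix.entryLinearMap ℂ ℂ i j).toContinuousLinearMap.restrictScalars
    ℝ).hasFDerivAt).comp_hasDerivAt t h2

lemma hasDerivAt_mul_entry {N : ℕ} {M P : ℝ → Matrix (Fin N) (Fin N) ℂ}
    {M' P' : Matrix (Fin N) (Fin N) ℂ} {t : ℝ}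
    (hM : ∀ i j, HasDerivAt (fun s => M s i j) (M' i j) t)
    (hP : ∀ i j, HasDerivAt (fun s => P s i j) (P' i j) t)
    (i j : Fin N) :
    HasDerivAt (fun s => (M s * P s) i j) ((M' * P t + M t * P') i j) t := by
  have h : ∀ k ∈ Finset.univ, HasDerivAt (fun s => M s i k * P s k j)
      (M' i k * P t k j + M t i k * P' k j) t := fun k _ => (hM i k).mul (hP k j)
  have hsum := HasDerivAt.fun_sum h
  have hfun : (fun s => (M s * P s) i j) = fun s => ∑ k, M s i k * P s k j := by
    funext s; rw [Matrix.mul_apply]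
  rw [hfun]
  refine hsum.congr_deriv ?_
  simp [Matrix.add_apply, Matrix.mul_apply, Finset.sum_add_distrib]

/-- an upper triangular matrix with positive real diagonal whose columns are orthonormal
is the identity. -/
lemma upperTriangular_unitary_eq_one {N : ℕ} (G : Matrix (Fin N) (Fin N) ℂ)
    (hG : Gᴴ * G = 1)
    (htri : ∀ a b : Fin N, (b : ℕ) < (a : ℕ) → G a b = 0)
    (hdiag : ∀ a : Fin N, 0 < (G a a).re ∧ (G a a).im = 0) :
    G = 1 := by
  have hcol : ∀ n : ℕ, ∀ j : Fin N, (j : ℕ) = n → ∀ i : Fin N,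
      G i j = if i = j then 1 else 0 := by
    intro n
    induction n using Nat.strong_induction_on with
    | _ n IH =>
    intro j hjn
    have hlow : ∀ i : Fin N, (i : ℕ) < (j : ℕ) → G i j = 0 := by
      intro i hij
      have hcoli : ∀ k, G k i = if k = i then 1 else 0 := IH (i : ℕ) (hjn ▸ hij) i rfl
      have hent : (Gᴴ * G) i j = (1 : Matrix (Fin N) (Fin N) ℂ) i j := by rw [hG]
      rw [Matrix.mul_apply, Finset.sum_eq_single i ?ha1 ?hb1] at hent
      · have hij' : i ≠ j := fun h => by subst h; exact lt_irrefl _ hij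
        simpa [Matrix.conjTranspose_apply, hcoli, Matrix.one_apply, hij'] using hent
      · intro k _ hk
        simp [Matrix.conjTranspose_apply, hcoli, hk]
      · intro h; exact absurd (Finset.mem_univ i) h
    intro i
    by_cases hij : i = j
    · subst hij
      have hent : (Gᴴ * G) i i = (1 : Matrix (Fin N) (Fin N) ℂ) i i := by rw [hG]
      rw [Matrix.mul_apply, Finset.sum_eq_single i ?ha2 ?hb2] at hent
      · have him : (G i i).im = 0 := (hdiag i).2
        have hre : 0 < (G i i).re := (hdiag i).1
        have hc : (starRingEnd ℂ) (G i i) = G i i := Complex.conj_eq_iff_im.mpr him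
        have hz : G i i * G i i = 1 := by
          simpa [Matrix.conjTranspose_apply, Matrix.one_apply, hc] using hent
        rcases mul_self_eq_one_iff.mp hz with h | h
        · simp [h]
        · rw [h] at hre; norm_num at hre
      · intro k _ hk
        rcases lt_or_gt_of_ne (fun h : (k : ℕ) = (i : ℕ) => hk (Fin.val_injective h)) with h | h
        · rw [hlow k h, mul_zero]
        · rw [htri k i h, mul_zero]
      · intro h; exact absurd (Finset.mem_univ i) h
    · rcases lt_or_gt_of_ne (fun h : (i : ℕ) = (j : ℕ) => hij (Fin.val_injective h)) with h | h
      · rw [hlow i h, if_neg hij]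
      · rw [htri i j h, if_neg hij]
  ext i j
  rw [hcol (j : ℕ) j rfl i, Matrix.one_apply]

/-- if `M * Rt = R'` with `Rt` upper triangular with positive real diagonal and `R'`
upper triangular with real diagonal, then `M` is upper triangular with real diagonal. -/
lemma upper_of_mul_upper {N : ℕ} (M Rt R' : Matrix (Fin N) (Fin N) ℂ)
    (hMR : M * Rt = R')
    (hRtri : ∀ a b : Fin N, (b : ℕ) < (a : ℕ) → Rt a b = 0)
    (hRdiag : ∀ a : Fin N, 0 < (Rt a a).re ∧ (Rt a a).im = 0)
    (hR'low : ∀ a b : Fin N, (b : ℕ) < (a : ℕ) → R' a b = 0)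
    (hR'diag : ∀ a : Fin N, (R' a a).im = 0) :
    (∀ a b : Fin N, (b : ℕ) < (a : ℕ) → M a b = 0) ∧ (∀ a : Fin N, (M a a).im = 0) := by
  have hz : ∀ a : Fin N, Rt a a ≠ 0 := by
    intro a h
    have := (hRdiag a).1
    rw [h] at this; simp at this
  have key : ∀ n : ℕ, ∀ b : Fin N, (b : ℕ) = n → ∀ a : Fin N, (b : ℕ) < (a : ℕ) → M a b = 0 := by
    intro n
    induction n using Nat.strong_induction_on with
    | _ n IH =>
    intro b hbn a hba
    have hent : (M * Rt) a b = R' a b := by rw [hMR]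
    rw [Matrix.mul_apply, Finset.sum_eq_single b ?ha3 ?hb3] at hent
    · rw [hR'low a b hba] at hent
      exact (mul_eq_zero.mp hent).resolve_right (hz b)
    · intro k _ hk
      rcases lt_or_gt_of_ne (fun h : (k : ℕ) = (b : ℕ) => hk (Fin.val_injective h)) with h | h
      · rw [IH (k : ℕ) (hbn ▸ h) k rfl a (h.trans hba), zero_mul]
      · rw [hRtri k b h, mul_zero]
    · intro h; exact absurd (Finset.mem_univ b) h
  have hlow : ∀ a b : Fin N, (b : ℕ) < (a : ℕ) → M a b = 0 :=
    fun a b => key (b : ℕ) b rfl a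
  refine ⟨hlow, fun a => ?_⟩
  have hent : (M * Rt) a a = R' a a := by rw [hMR]
  rw [Matrix.mul_apply, Finset.sum_eq_single a ?ha4 ?hb4] at hent
  · have h1 : (M a a * Rt a a).im = 0 := by rw [hent]; exact hR'diag a
    rw [Complex.mul_im, (hRdiag a).2, mul_zero, zero_add] at h1
    exact (mul_eq_zero.mp h1).resolve_right (ne_of_gt (hRdiag a).1)
  · intro k _ hk
    rcases lt_or_gt_of_ne (fun h : (k : ℕ) = (a : ℕ) => hk (Fin.val_injective h)) with h | h
    · rw [hlow a k h, zero_mul]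
    · rw [hRtri k a h, mul_zero]
  · intro h; exact absurd (Finset.mem_univ a) h

/-- If `exp(t X_0) = Q(t) R(t)` is a differentiable QR decomposition
with `Q(t)` unitary and `R(t)` upper triangular with positive diagonal, then
`X(t) := Q(t)^* X_0 Q(t)` satisfies `X(0) = X_0`, `X(t) = R(t) X_0 R(t)⁻¹`, and solves
the Toda flow `∂_t X = X B(X) - B(X) X`. -/
theorem toda_flow_solution
    (N : ℕ) (X0 : Matrix (Fin N) (Fin N) ℂ) (hX0 : X0.IsHermitian)
    (Q R : ℝ → Matrix (Fin N) (Fin N) ℂ)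
    (hQdiff : ∀ (i j : Fin N) (t : ℝ), DifferentiableAt ℝ (fun s => Q s i j) t)
    (hRdiff : ∀ (i j : Fin N) (t : ℝ), DifferentiableAt ℝ (fun s => R s i j) t)
    (hQunit : ∀ t : ℝ, Q t ∈ Matrix.unitaryGroup (Fin N) ℂ)
    (hRtri : ∀ (t : ℝ) (i j : Fin N),
        ((j : ℕ) < (i : ℕ) → R t i j = 0) ∧
        (i = j → 0 < (R t i j).re ∧ (R t i j).im = 0))
    (hQR : ∀ t : ℝ, NormedSpace.exp ((t : ℂ) • X0) = Q t * R t) :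
    (Q 0)ᴴ * X0 * Q 0 = X0 ∧
    (∀ t : ℝ, (Q t)ᴴ * X0 * Q t = R t * X0 * (R t)⁻¹) ∧
    (∀ (t : ℝ) (i j : Fin N),
        HasDerivAt (fun s => ((Q s)ᴴ * X0 * Q s) i j)
          ((((Q t)ᴴ * X0 * Q t) * todaB ((Q t)ᴴ * X0 * Q t) -
              todaB ((Q t)ᴴ * X0 * Q t) * ((Q t)ᴴ * X0 * Q t)) i j) t) := by
  have star_eq : ∀ A : Matrix (Fin N) (Fin N) ℂ, star A = Aᴴ := fun A => rfl
  have hQs : ∀ u : ℝ, (Q u)ᴴ * Q u = 1 := fun u => by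
    have h := Matrix.mem_unitaryGroup_iff'.mp (hQunit u)
    rwa [star_eq] at h
  have hQs' : ∀ u : ℝ, Q u * (Q u)ᴴ = 1 := fun u => by
    have h := Matrix.mem_unitaryGroup_iff.mp (hQunit u)
    rwa [star_eq] at h
  have hQR0 : Q 0 * R 0 = 1 := by
    have h := hQR 0
    rw [show ((0 : ℝ) : ℂ) = 0 from by norm_num, zero_smul, NormedSpace.exp_zero] at h
    exact h.symm
  have hR0Q : R 0 = (Q 0)ᴴ := by
    calc R 0 = (Q 0)ᴴ * Q 0 * R 0 := by rw [hQs 0, one_mul]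
      _ = (Q 0)ᴴ * (Q 0 * R 0) := by rw [mul_assoc]
      _ = (Q 0)ᴴ := by rw [hQR0, mul_one]
  have hR0one : R 0 = 1 := by
    apply upperTriangular_unitary_eq_one
    · rw [hR0Q, conjTranspose_conjTranspose]
      exact hQs' 0
    · exact fun a b h => (hRtri 0 a b).1 h
    · exact fun a => (hRtri 0 a a).2 rfl
  have hQ0one : Q 0 = 1 := by
    have h1 : (Q 0)ᴴ = 1 := by rw [← hR0Q, hR0one]
    calc Q 0 = ((Q 0)ᴴ)ᴴ := (conjTranspose_conjTranspose _).symm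
      _ = (1 : Matrix (Fin N) (Fin N) ℂ)ᴴ := by rw [h1]
      _ = 1 := Matrix.conjTranspose_one
  have hcomm : ∀ u : ℝ, X0 * (Q u * R u) = Q u * R u * X0 := by
    intro u
    rw [← hQR u]
    exact (((Commute.refl X0).smul_right ((u : ℝ) : ℂ)).exp_right).eq
  have hRdet : ∀ u : ℝ, IsUnit (R u).det := by
    intro u
    have hE : IsUnit (NormedSpace.exp ((u : ℂ) • X0)) := Matrix.isUnit_exp _
    have h2 : IsUnit (Q u * R u).det := by
      rw [← hQR u]
      exact (Matrix.isUnit_iff_isUnit_det _).mp hE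
    rw [Matrix.det_mul] at h2
    exact isUnit_of_mul_isUnit_right h2
  have hkey : ∀ u : ℝ, (Q u)ᴴ * X0 * Q u * R u = R u * X0 := by
    intro u
    calc (Q u)ᴴ * X0 * Q u * R u = (Q u)ᴴ * (X0 * (Q u * R u)) := by
          simp only [mul_assoc]
      _ = (Q u)ᴴ * (Q u * (R u * X0)) := by rw [hcomm u, mul_assoc]
      _ = (Q u)ᴴ * Q u * (R u * X0) := by rw [mul_assoc]
      _ = R u * X0 := by rw [hQs u, one_mul]
  refine ⟨by rw [hQ0one]; simp, fun u => ?_, ?_⟩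
  · calc (Q u)ᴴ * X0 * Q u = (Q u)ᴴ * X0 * Q u * (R u * (R u)⁻¹) := by
          rw [Matrix.mul_nonsing_inv _ (hRdet u), mul_one]
      _ = (Q u)ᴴ * X0 * Q u * R u * (R u)⁻¹ := by rw [← mul_assoc]
      _ = R u * X0 * (R u)⁻¹ := by rw [hkey u]
  · intro t i j
    set Q' : Matrix (Fin N) (Fin N) ℂ := Matrix.of fun a b => deriv (fun s => Q s a b) t with hQ'
    set R' : Matrix (Fin N) (Fin N) ℂ := Matrix.of fun a b => deriv (fun s => R s a b) t with hR'
    have hQd : ∀ a b, HasDerivAt (fun s => Q s a b) (Q' a b) t := fun a b =>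
      (hQdiff a b t).hasDerivAt
    have hRd : ∀ a b, HasDerivAt (fun s => R s a b) (R' a b) t := fun a b =>
      (hRdiff a b t).hasDerivAt
    have hQHd : ∀ a b, HasDerivAt (fun s => (Q s)ᴴ a b) (Q'ᴴ a b) t := by
      intro a b
      have h := (hQd b a).star
      simpa [Matrix.conjTranspose_apply] using h
    have hEQ : X0 * (Q t * R t) = Q' * R t + Q t * R' := by
      ext a b
      have h1 := hasDerivAt_mul_entry hQd hRd a b
      have h3 := exp_entry_hasDerivAt X0 t a b
      have hfun : (fun s : ℝ => (NormedSpace.exp ((s : ℂ) • X0)) a b)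
          = fun s => (Q s * R s) a b := by
        funext s; rw [hQR s]
      rw [hfun] at h3
      have h4 := h3.unique h1
      rw [hQR t] at h4
      exact h4
    have hskew : Q'ᴴ * Q t + (Q t)ᴴ * Q' = 0 := by
      ext a b
      have h1 := hasDerivAt_mul_entry hQHd hQd a b
      have hfun : (fun s => ((Q s)ᴴ * Q s) a b)
          = fun _ : ℝ => (1 : Matrix (Fin N) (Fin N) ℂ) a b := by
        funext s; rw [hQs s]
      rw [hfun] at h1
      have h2 := (hasDerivAt_const t ((1 : Matrix (Fin N) (Fin N) ℂ) a b)).unique h1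
      simpa using h2.symm
    have hR'low : ∀ a b : Fin N, (b : ℕ) < (a : ℕ) → R' a b = 0 := by
      intro a b hab
      have h1 := hRd a b
      have hfun : (fun s => R s a b) = fun _ : ℝ => (0 : ℂ) :=
        funext fun s => (hRtri s a b).1 hab
      rw [hfun] at h1
      exact ((hasDerivAt_const t (0 : ℂ)).unique h1).symm
    have hR'diag : ∀ a : Fin N, (R' a a).im = 0 := by
      intro a
      have h1 := Complex.imCLM.hasFDerivAt.comp_hasDerivAt t (hRd a a)
      have hfun : (⇑Complex.imCLM ∘ fun s => R s a a) = fun _ : ℝ => (0 : ℝ) :=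
        funext fun s => ((hRtri s a a).2 rfl).2
      rw [hfun] at h1
      have h2 := (hasDerivAt_const t (0 : ℝ)).unique h1
      simpa using h2.symm
    have hMR : ((Q t)ᴴ * X0 * Q t - (Q t)ᴴ * Q') * R t = R' := by
      have h2 : (Q t)ᴴ * (X0 * (Q t * R t)) = (Q t)ᴴ * (Q' * R t + Q t * R') := by rw [hEQ]
      have lhs : (Q t)ᴴ * (X0 * (Q t * R t)) = (Q t)ᴴ * X0 * Q t * R t := by
        simp only [mul_assoc]
      have rhs : (Q t)ᴴ * (Q' * R t + Q t * R') = (Q t)ᴴ * Q' * R t + R' := by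
        rw [mul_add, ← mul_assoc, ← mul_assoc, hQs t, one_mul]
      rw [lhs, rhs] at h2
      rw [sub_mul, h2, add_sub_cancel_left]
    obtain ⟨hMlow, hMdiag⟩ := upper_of_mul_upper _ _ _ hMR
      (fun a b h => (hRtri t a b).1 h) (fun a => (hRtri t a a).2 rfl) hR'low hR'diag
    have hXH : ((Q t)ᴴ * X0 * Q t)ᴴ = (Q t)ᴴ * X0 * Q t := by
      rw [Matrix.conjTranspose_mul, Matrix.conjTranspose_mul, conjTranspose_conjTranspose,
        hX0.eq, ← mul_assoc]
    have hAH : ((Q t)ᴴ * Q')ᴴ = -((Q t)ᴴ * Q') := by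
      rw [Matrix.conjTranspose_mul, conjTranspose_conjTranspose]
      exact eq_neg_of_add_eq_zero_left hskew
    have hXim : ∀ c : Fin N, (((Q t)ᴴ * X0 * Q t) c c).im = 0 := by
      intro c
      have h := congrArg (fun Z : Matrix (Fin N) (Fin N) ℂ => Z c c) hXH
      simp only [Matrix.conjTranspose_apply] at h
      exact Complex.conj_eq_iff_im.mp h
    have hAe : ∀ c d : Fin N, (starRingEnd ℂ) (((Q t)ᴴ * Q') d c) = -(((Q t)ᴴ * Q') c d) := by
      intro c d
      have h := congrArg (fun Z : Matrix (Fin N) (Fin N) ℂ => Z c d) hAH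
      simpa [Matrix.conjTranspose_apply] using h
    have hMlow' : ∀ c d : Fin N, (d : ℕ) < (c : ℕ) →
        ((Q t)ᴴ * Q') c d = ((Q t)ᴴ * X0 * Q t) c d := by
      intro c d h
      have h2 : ((Q t)ᴴ * X0 * Q t) c d - ((Q t)ᴴ * Q') c d = 0 := by
        simpa [Matrix.sub_apply] using hMlow c d h
      exact (sub_eq_zero.mp h2).symm
    have hA : (Q t)ᴴ * Q' = todaB ((Q t)ᴴ * X0 * Q t) := by
      ext a b
      rcases lt_trichotomy ((a : ℕ)) ((b : ℕ)) with h | h | h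
      · have e1 : (starRingEnd ℂ) (((Q t)ᴴ * Q') b a) = -(((Q t)ᴴ * Q') a b) := hAe a b
        rw [hMlow' b a h] at e1
        have e2 : ((Q t)ᴴ * Q') a b = -(starRingEnd ℂ) (((Q t)ᴴ * X0 * Q t) b a) := by
          rw [e1, neg_neg]
        rw [e2]
        simp [todaB, lowerPart, Matrix.sub_apply, Matrix.conjTranspose_apply,
          Complex.star_def, show a < b from h, show ¬ b < a from lt_asymm h]
      · have hab : a = b := Fin.val_injective h
        subst hab
        have e1 : (starRingEnd ℂ) (((Q t)ᴴ * Q') a a) = -(((Q t)ᴴ * Q') a a) := hAe a a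
        have hre : (((Q t)ᴴ * Q') a a).re = 0 := by
          have h3 := congrArg Complex.re e1
          simp only [Complex.conj_re, Complex.neg_re] at h3
          linarith
        have him : (((Q t)ᴴ * Q') a a).im = 0 := by
          have h2 := hMdiag a
          have h3 : (((Q t)ᴴ * X0 * Q t) a a).im - (((Q t)ᴴ * Q') a a).im = 0 := by
            simpa [Matrix.sub_apply, Complex.sub_im] using h2
          have h4 := hXim a
          linarith
        have hz : ((Q t)ᴴ * Q') a a = 0 := by
          apply Complex.ext <;> simp [hre, him]
        rw [hz]
        simp [todaB, lowerPart, Matrix.sub_apply, Matrix.conjTranspose_apply]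
      · rw [hMlow' a b h]
        simp [todaB, lowerPart, Matrix.sub_apply, Matrix.conjTranspose_apply,
          Complex.star_def, show b < a from h, show ¬ a < b from lt_asymm h]
    have hQHX : ∀ a b, HasDerivAt (fun s => ((Q s)ᴴ * X0) a b)
        ((Q'ᴴ * X0 + (Q t)ᴴ * (0 : Matrix (Fin N) (Fin N) ℂ)) a b) t :=
      hasDerivAt_mul_entry hQHd (fun a b => by simpa using hasDerivAt_const t (X0 a b))
    have hXd : ∀ a b, HasDerivAt (fun s => ((Q s)ᴴ * X0 * Q s) a b)
        (((Q'ᴴ * X0 + (Q t)ᴴ * (0 : Matrix (Fin N) (Fin N) ℂ)) * Q t + (Q t)ᴴ * X0 * Q') a b) t :=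
      fun a b => hasDerivAt_mul_entry hQHX hQd a b
    have hQ'H : Q'ᴴ = -((Q t)ᴴ * Q' * (Q t)ᴴ) := by
      have h := eq_neg_of_add_eq_zero_left hskew
      calc Q'ᴴ = Q'ᴴ * (Q t * (Q t)ᴴ) := by rw [hQs' t, mul_one]
        _ = Q'ᴴ * Q t * (Q t)ᴴ := by rw [mul_assoc]
        _ = -((Q t)ᴴ * Q') * (Q t)ᴴ := by rw [h]
        _ = -((Q t)ᴴ * Q' * (Q t)ᴴ) := by rw [neg_mul]
    have hfinal : (Q'ᴴ * X0 + (Q t)ᴴ * (0 : Matrix (Fin N) (Fin N) ℂ)) * Q t + (Q t)ᴴ * X0 * Q'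
        = ((Q t)ᴴ * X0 * Q t) * todaB ((Q t)ᴴ * X0 * Q t)
          - todaB ((Q t)ᴴ * X0 * Q t) * ((Q t)ᴴ * X0 * Q t) := by
      rw [← hA, mul_zero, add_zero, hQ'H]
      have h1 : (Q t)ᴴ * X0 * Q t * ((Q t)ᴴ * Q') = (Q t)ᴴ * X0 * Q' := by
        calc (Q t)ᴴ * X0 * Q t * ((Q t)ᴴ * Q')
            = (Q t)ᴴ * (X0 * (Q t * ((Q t)ᴴ * Q'))) := by simp only [mul_assoc]
          _ = (Q t)ᴴ * (X0 * (Q t * (Q t)ᴴ * Q')) := by rw [mul_assoc (Q t)]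
          _ = (Q t)ᴴ * (X0 * Q') := by rw [hQs' t, one_mul]
          _ = (Q t)ᴴ * X0 * Q' := by rw [mul_assoc]
      have h2 : -((Q t)ᴴ * Q' * (Q t)ᴴ) * X0 * Q t
          = -((Q t)ᴴ * Q' * ((Q t)ᴴ * X0 * Q t)) := by
        simp only [neg_mul, mul_assoc]
      rw [h1, h2, neg_add_eq_sub]
    have h := hXd i j
    rw [hfinal] at h
    exact h

end
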